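/- Suppose X takes exactly two values x₁ ≠ x₂ in ℝ^p, with P(X = x₁) = q ∈ (0, 1). Then Λ(Y|X) = ( 2 Ψ(κ(x₁), κ(x₂)) − 1 )² = ( Ψ(κ(x₁), κ(x₂)) − Ψ(κ(x₂), κ(x₁)) )²; in particular this value does not depend on q. -/

import Mathlib

open MeasureTheory ProbabilityTheory Set Filter Topology
open scoped ENNReal

/-- The (nonparametric) relative effect `Ψ(μ, ν) = ∫ μ((-∞,y)) + (1/2) μ({y}) dν(y)`. -/
noncomputable def relEffect (μ ν : Measure ℝ) : ℝ :=
  ∫ y, ((μ (Set.Iio y)).toReal + (1 / 2) * (μ {y}).toReal) ∂ν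

/-- `α(μ) = 1 - ∫ μ({x}) dμ(x) = 1 - P(X = X*)`, the non-discrete mass of `μ`. -/
noncomputable def alphaCoeff {E : Type*} [MeasurableSpace E] (μ : Measure E) : ℝ :=
  1 - ∫ x, (μ {x}).toReal ∂μ

/-- The coefficient of separation `Λ(Y|X)`. -/
noncomputable def sepCoeff {Ω E : Type*} [MeasurableSpace Ω] [MeasurableSpace E]
    (P : Measure Ω) [IsFiniteMeasure P] (Y : Ω → ℝ) (X : Ω → E) : ℝ :=
  (alphaCoeff (P.map X))⁻¹ *
    ∫ x : E × E,
      (relEffect (condDistrib Y X P x.1) (condDistrib Y X P x.2)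
        - relEffect (condDistrib Y X P x.2) (condDistrib Y X P x.1)) ^ 2
      ∂((P.map X).prod (P.map X))

/-- A random variable is non-degenerate if it is not a.s. constant. -/
def Nondegenerate {Ω α : Type*} [MeasurableSpace Ω] (P : Measure Ω) (Z : Ω → α) : Prop :=
  ¬ ∃ c, ∀ᵐ ω ∂P, Z ω = c


lemma integral_eq_sum_of_null_compl {E : Type*} [MeasurableSpace E] [MeasurableSingletonClass E]
    (μ : Measure E) [IsFiniteMeasure μ] (s : Finset E) (hnull : μ ((↑s : Set E))ᶜ = 0)
    (f : E → ℝ) :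
    ∫ z, f z ∂μ = ∑ x ∈ s, (μ {x}).toReal * f x := by
  have hae : ∀ᵐ z ∂μ, z ∈ (↑s : Set E) := by
    rw [ae_iff]
    exact hnull
  have hg : f =ᵐ[μ] fun z => ∑ x ∈ s, Set.indicator {x} (fun _ => f x) z := by
    filter_upwards [hae] with z hz
    rw [Finset.sum_eq_single_of_mem z hz]
    · simp
    · intro x hx hxz
      simp [Set.indicator_of_notMem, Ne.symm hxz]
  rw [integral_congr_ae hg, integral_finset_sum]
  · refine Finset.sum_congr rfl fun x _ => ?_
    rw [integral_indicator_const (f x) (measurableSet_singleton x), smul_eq_mul]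
    rfl
  · intro x _
    exact (integrable_const (f x)).indicator (measurableSet_singleton x)

lemma lintegral_Iio_add_lintegral_Iic (μ ν : Measure ℝ) [IsProbabilityMeasure μ]
    [IsProbabilityMeasure ν] :
    (∫⁻ y, μ (Iio y) ∂ν) + (∫⁻ x, ν (Iic x) ∂μ) = 1 := by
  have hlt : MeasurableSet {p : ℝ × ℝ | p.1 < p.2} :=
    measurableSet_lt measurable_fst measurable_snd
  have hlt' : MeasurableSet {p : ℝ × ℝ | p.2 < p.1} :=
    measurableSet_lt measurable_snd measurable_fst
  have h1 : (∫⁻ y, μ (Iio y) ∂ν) = (ν.prod μ) {p : ℝ × ℝ | p.2 < p.1} := by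
    rw [Measure.prod_apply hlt']
    rfl
  have h2 : (∫⁻ x, ν (Iic x) ∂μ) = (μ.prod ν) {p : ℝ × ℝ | p.2 ≤ p.1} := by
    rw [Measure.prod_apply (measurableSet_le measurable_snd measurable_fst)]
    rfl
  have h3 : (ν.prod μ) {p : ℝ × ℝ | p.2 < p.1} = (μ.prod ν) {p : ℝ × ℝ | p.1 < p.2} := by
    rw [← Measure.prod_swap, Measure.map_apply measurable_swap hlt']
    rfl
  have h4 : {p : ℝ × ℝ | p.2 ≤ p.1} = {p : ℝ × ℝ | p.1 < p.2}ᶜ := by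
    ext p; simp [not_lt]
  rw [h1, h2, h3, h4, measure_add_measure_compl hlt, measure_univ]

lemma relEffect_eq_half (μ ν : Measure ℝ) [IsProbabilityMeasure μ] [IsProbabilityMeasure ν] :
    (∫ y, ((μ (Set.Iio y)).toReal + (1 / 2) * (μ {y}).toReal) ∂ν)
      = (1 / 2) * ((∫⁻ y, μ (Iio y) ∂ν).toReal + (∫⁻ y, μ (Iic y) ∂ν).toReal) := by
  have mIio : Measurable fun y => μ (Iio y) :=
    Monotone.measurable fun a b hab => measure_mono (Iio_subset_Iio hab)
  have mIic : Measurable fun y => μ (Iic y) :=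
    Monotone.measurable fun a b hab => measure_mono (Iic_subset_Iic.mpr hab)
  have hIic : ∀ y : ℝ, μ (Iic y) = μ (Iio y) + μ {y} := by
    intro y
    rw [← Iio_union_right, measure_union (by simp) (measurableSet_singleton y)]
  have hint : ∀ (g : ℝ → ℝ≥0∞), Measurable g → (∀ y, g y ≤ 1) →
      Integrable (fun y => (g y).toReal) ν := by
    intro g hg hb
    refine Integrable.mono' (integrable_const (1 : ℝ)) hg.ennreal_toReal.aestronglyMeasurable
      (ae_of_all _ fun y => ?_)
    rw [Real.norm_eq_abs, abs_of_nonneg ENNReal.toReal_nonneg]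
    simpa using ENNReal.toReal_mono (by simp) (hb y)
  have key : ∀ y : ℝ, (μ (Set.Iio y)).toReal + (1 / 2) * (μ {y}).toReal
      = (1 / 2) * ((μ (Iio y)).toReal + (μ (Iic y)).toReal) := by
    intro y
    rw [hIic y, ENNReal.toReal_add (measure_ne_top μ _) (measure_ne_top μ _)]
    ring
  rw [show (fun y => (μ (Set.Iio y)).toReal + (1 / 2) * (μ {y}).toReal)
      = fun y => (1 / 2) * ((μ (Iio y)).toReal + (μ (Iic y)).toReal) from funext key]
  rw [integral_const_mul,
    integral_add (hint _ mIio fun y => prob_le_one) (hint _ mIic fun y => prob_le_one),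
    integral_toReal mIio.aemeasurable (ae_of_all _ fun y => measure_lt_top μ _),
    integral_toReal mIic.aemeasurable (ae_of_all _ fun y => measure_lt_top μ _)]

lemma relEffect_add_comm (μ ν : Measure ℝ) [IsProbabilityMeasure μ] [IsProbabilityMeasure ν] :
    (∫ y, ((μ (Set.Iio y)).toReal + (1 / 2) * (μ {y}).toReal) ∂ν)
      + (∫ y, ((ν (Set.Iio y)).toReal + (1 / 2) * (ν {y}).toReal) ∂μ) = 1 := by
  set L1 := ∫⁻ y, μ (Iio y) ∂ν with hL1
  set L2 := ∫⁻ y, μ (Iic y) ∂ν with hL2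
  set L3 := ∫⁻ x, ν (Iio x) ∂μ with hL3
  set L4 := ∫⁻ x, ν (Iic x) ∂μ with hL4
  have hA : L1 + L4 = 1 := lintegral_Iio_add_lintegral_Iic μ ν
  have hB : L3 + L2 = 1 := lintegral_Iio_add_lintegral_Iic ν μ
  have f1 : L1 ≠ ∞ := fun h => by simp [h] at hA
  have f4 : L4 ≠ ∞ := fun h => by simp [h] at hA
  have f3 : L3 ≠ ∞ := fun h => by simp [h] at hB
  have f2 : L2 ≠ ∞ := fun h => by simp [h] at hB
  have tA : L1.toReal + L4.toReal = 1 := by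
    rw [← ENNReal.toReal_add f1 f4, hA, ENNReal.toReal_one]
  have tB : L3.toReal + L2.toReal = 1 := by
    rw [← ENNReal.toReal_add f3 f2, hB, ENNReal.toReal_one]
  rw [relEffect_eq_half μ ν, relEffect_eq_half ν μ]
  rw [← hL1, ← hL2, ← hL3, ← hL4]
  linarith

lemma relEffect_add_relEffect (μ ν : Measure ℝ) [IsProbabilityMeasure μ]
    [IsProbabilityMeasure ν] : relEffect μ ν + relEffect ν μ = 1 := by
  unfold relEffect
  exact relEffect_add_comm μ ν

/-- For a two-valued predictor, `Λ(Y|X)` mimics the relative effect of the two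
conditional distributions and does not depend on the group weight `q`. -/
theorem sepCoeff_two_groups
    {Ω : Type*} [MeasurableSpace Ω] {p : ℕ} (hp : 1 ≤ p)
    (P : Measure Ω) [IsProbabilityMeasure P]
    (X : Ω → (Fin p → ℝ)) (Y : Ω → ℝ)
    (hX : Measurable X) (hY : Measurable Y)
    (hYnd : Nondegenerate P Y)
    (x₁ x₂ : Fin p → ℝ) (hne : x₁ ≠ x₂)
    (hval : ∀ᵐ ω ∂P, X ω = x₁ ∨ X ω = x₂)
    (q : ℝ) (hq0 : 0 < q) (hq1 : q < 1)
    (hq : P (X ⁻¹' {x₁}) = ENNReal.ofReal q) :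
    sepCoeff P Y X
      = (2 * relEffect (condDistrib Y X P x₁) (condDistrib Y X P x₂) - 1) ^ 2
    ∧ sepCoeff P Y X
      = (relEffect (condDistrib Y X P x₁) (condDistrib Y X P x₂)
          - relEffect (condDistrib Y X P x₂) (condDistrib Y X P x₁)) ^ 2 := by
  classical
  set μ := P.map X with hμdef
  haveI hμprob : IsProbabilityMeasure μ := Measure.isProbabilityMeasure_map hX.aemeasurable
  have hset : MeasurableSet ({x₁, x₂} : Set (Fin p → ℝ)) :=
    (measurableSet_singleton x₂).insert x₁
  have hnull : μ (({x₁, x₂} : Set (Fin p → ℝ))ᶜ) = 0 := by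
    rw [hμdef, Measure.map_apply hX hset.compl]
    have h0 : P {ω | ¬(X ω = x₁ ∨ X ω = x₂)} = 0 := ae_iff.mp hval
    convert h0 using 2
    ext ω; simp
  have hμ1 : μ {x₁} = ENNReal.ofReal q := by
    rw [hμdef, Measure.map_apply hX (measurableSet_singleton _)]; exact hq
  have hμone : μ ({x₁, x₂} : Set (Fin p → ℝ)) = 1 := (prob_compl_eq_zero_iff hset).mp hnull
  have hμ2 : μ {x₂} = ENNReal.ofReal (1 - q) := by
    have hd : Disjoint ({x₁} : Set (Fin p → ℝ)) {x₂} := by simp [hne]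
    have hu : ENNReal.ofReal q + μ {x₂} = 1 := by
      rw [← hμ1, ← measure_union hd (measurableSet_singleton x₂)]
      rw [Set.singleton_union]; exact hμone
    have h2 : μ {x₂} = 1 - ENNReal.ofReal q := by
      rw [← hu]; exact (ENNReal.add_sub_cancel_left ENNReal.ofReal_ne_top).symm
    rw [h2, ← ENNReal.ofReal_one]
    exact (ENNReal.ofReal_sub 1 hq0.le).symm
  -- alpha coefficient
  have hcoe : ((({x₁, x₂} : Finset (Fin p → ℝ)) : Set (Fin p → ℝ))) = {x₁, x₂} := by simp
  have hsne : x₁ ∉ ({x₂} : Finset (Fin p → ℝ)) := by simp [hne]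
  have hint1 := integral_eq_sum_of_null_compl μ {x₁, x₂}
    (by rw [hcoe]; exact hnull) (fun x => (μ {x}).toReal)
  have halpha : alphaCoeff μ = 2 * (q * (1 - q)) := by
    rw [alphaCoeff, hint1, Finset.sum_insert hsne, Finset.sum_singleton, hμ1, hμ2,
      ENNReal.toReal_ofReal hq0.le, ENNReal.toReal_ofReal (by linarith)]
    ring
  -- the product measure
  set ν := μ.prod μ with hνdef
  set f : ((Fin p → ℝ) × (Fin p → ℝ)) → ℝ := fun z =>
    (relEffect (condDistrib Y X P z.1) (condDistrib Y X P z.2)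
      - relEffect (condDistrib Y X P z.2) (condDistrib Y X P z.1)) ^ 2 with hfdef
  set t : Finset ((Fin p → ℝ) × (Fin p → ℝ)) := {(x₁, x₁), (x₁, x₂), (x₂, x₁), (x₂, x₂)}
    with htdef
  have htcoe : ((t : Finset _) : Set ((Fin p → ℝ) × (Fin p → ℝ)))
      = ({x₁, x₂} : Set (Fin p → ℝ)) ×ˢ ({x₁, x₂} : Set (Fin p → ℝ)) := by
    ext z
    simp only [htdef, Finset.coe_insert, Finset.coe_singleton, Set.mem_insert_iff,
      Set.mem_singleton_iff, Set.mem_prod, Prod.ext_iff]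
    tauto
  have hsub : (({x₁, x₂} : Set (Fin p → ℝ)) ×ˢ ({x₁, x₂} : Set (Fin p → ℝ)))ᶜ
      ⊆ ((({x₁, x₂} : Set (Fin p → ℝ))ᶜ) ×ˢ (univ : Set (Fin p → ℝ)))
        ∪ ((univ : Set (Fin p → ℝ)) ×ˢ (({x₁, x₂} : Set (Fin p → ℝ))ᶜ)) := by
    intro z hz
    simp only [Set.mem_compl_iff, Set.mem_prod, not_and_or] at hz
    simp only [Set.mem_union, Set.mem_prod, Set.mem_univ, Set.mem_compl_iff, and_true, true_and]
    tauto
  have h01 : ν ((({x₁, x₂} : Set (Fin p → ℝ))ᶜ) ×ˢ (univ : Set (Fin p → ℝ))) = 0 := by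
    rw [hνdef, Measure.prod_prod, hnull, zero_mul]
  have h02 : ν ((univ : Set (Fin p → ℝ)) ×ˢ (({x₁, x₂} : Set (Fin p → ℝ))ᶜ)) = 0 := by
    rw [hνdef, Measure.prod_prod, hnull, mul_zero]
  have hnull' : ν (((t : Finset _) : Set ((Fin p → ℝ) × (Fin p → ℝ))))ᶜ = 0 := by
    rw [htcoe]
    exact measure_mono_null hsub (measure_union_null h01 h02)
  have hνs : ∀ a b : Fin p → ℝ, ν {(a, b)} = μ {a} * μ {b} := fun a b => by
    rw [hνdef, ← Set.singleton_prod_singleton, Measure.prod_prod]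
  -- the integral over the product
  have hI := integral_eq_sum_of_null_compl ν t hnull' f
  have n1 : ((x₁, x₁) : (Fin p → ℝ) × (Fin p → ℝ))
      ∉ ({(x₁, x₂), (x₂, x₁), (x₂, x₂)} : Finset _) := by
    simp [Prod.ext_iff, hne, hne.symm]
  have n2 : ((x₁, x₂) : (Fin p → ℝ) × (Fin p → ℝ))
      ∉ ({(x₂, x₁), (x₂, x₂)} : Finset _) := by
    simp [Prod.ext_iff, hne, hne.symm]
  have n3 : ((x₂, x₁) : (Fin p → ℝ) × (Fin p → ℝ)) ∉ ({(x₂, x₂)} : Finset _) := by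
    simp [Prod.ext_iff, hne, hne.symm]
  rw [htdef, Finset.sum_insert n1, Finset.sum_insert n2, Finset.sum_insert n3,
    Finset.sum_singleton] at hI
  set c := relEffect (condDistrib Y X P x₁) (condDistrib Y X P x₂)
    - relEffect (condDistrib Y X P x₂) (condDistrib Y X P x₁) with hc
  have hf11 : f (x₁, x₁) = 0 := by simp [hfdef]
  have hf22 : f (x₂, x₂) = 0 := by simp [hfdef]
  have hf12 : f (x₁, x₂) = c ^ 2 := rfl
  have hf21 : f (x₂, x₁) = c ^ 2 := by
    simp only [hfdef, hc]; ring
  have hm12 : (ν {(x₁, x₂)}).toReal = q * (1 - q) := by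
    rw [hνs, hμ1, hμ2, ENNReal.toReal_mul, ENNReal.toReal_ofReal hq0.le,
      ENNReal.toReal_ofReal (by linarith)]
  have hm21 : (ν {(x₂, x₁)}).toReal = (1 - q) * q := by
    rw [hνs, hμ1, hμ2, ENNReal.toReal_mul, ENNReal.toReal_ofReal hq0.le,
      ENNReal.toReal_ofReal (by linarith)]
  rw [hf11, hf22, hf12, hf21, hm12, hm21] at hI
  -- put everything together
  have hqq : (2 : ℝ) * (q * (1 - q)) ≠ 0 := by
    have h1q : (0:ℝ) < 1 - q := by linarith
    positivity
  have hsep : sepCoeff P Y X = c ^ 2 := by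
    rw [sepCoeff]
    rw [← hμdef, ← hνdef, halpha]
    have : (∫ x : ((Fin p → ℝ) × (Fin p → ℝ)),
        (relEffect (condDistrib Y X P x.1) (condDistrib Y X P x.2)
          - relEffect (condDistrib Y X P x.2) (condDistrib Y X P x.1)) ^ 2 ∂ν)
        = ∫ z, f z ∂ν := rfl
    rw [this, hI]
    have h1q' : (1:ℝ) - q ≠ 0 := (by linarith : (0:ℝ) < 1 - q).ne'
    field_simp
    ring
  haveI i1 : IsProbabilityMeasure (condDistrib Y X P x₁) := inferInstance
  haveI i2 : IsProbabilityMeasure (condDistrib Y X P x₂) := inferInstance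
  have hone : relEffect (condDistrib Y X P x₁) (condDistrib Y X P x₂)
      + relEffect (condDistrib Y X P x₂) (condDistrib Y X P x₁) = 1 :=
    relEffect_add_relEffect _ _
  have hc' : c = 2 * relEffect (condDistrib Y X P x₁) (condDistrib Y X P x₂) - 1 := by
    rw [hc]; linarith
  exact ⟨by rw [hsep, hc'], hsep⟩
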